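/- For any x0 ∈ (0,1), L > 0, and h small enough (so that f_{L,x0,h} is a density and 1 - L h² + L h ≤ 2), the Kullback–Leibler divergence from the uniform distribution on [0,1] to the distribution with triangle perturbation density f_{L,x0,h} satisfies KL(Uniform ‖ P_{f}) ≤ C(h³ + h⁴) for a constant C depending only on L. -/

import Mathlib

open MeasureTheory Set intervalIntegral

set_option maxHeartbeats 1000000

/-- The triangle perturbation density. -/
noncomputable def triDens (L x0 h x : ℝ) : ℝ :=
  1 - L * h ^ 2 + max (L * (h - |x - x0|)) 0

private lemma neg_log_le_inv_sub_one {y : ℝ} (hy : 0 < y) : -Real.log y ≤ y⁻¹ - 1 := by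
  have h := Real.log_le_sub_one_of_pos (inv_pos.mpr hy)
  rw [Real.log_inv] at h
  linarith

private lemma neg_log_le_two_rpow {y : ℝ} (hy : 0 < y) :
    -Real.log y ≤ 2 * y ^ (-(1/2) : ℝ) := by
  have h1 : Real.log (y ^ ((1/2) : ℝ)) = (1/2) * Real.log y := Real.log_rpow hy _
  have h2 := neg_log_le_inv_sub_one (Real.rpow_pos_of_pos hy ((1/2):ℝ))
  have h3 : y ^ (-(1/2) : ℝ) = (y ^ ((1/2):ℝ))⁻¹ := Real.rpow_neg hy.le _
  rw [h1] at h2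
  linarith

private lemma chord_bound {a M : ℝ} (b : ℝ) (ha : 0 < a) (hM : 0 < M) (hb0 : 0 ≤ b)
    (hbM : b ≤ M) :
    -Real.log (a + b) ≤ -Real.log a - b / M * (Real.log (a + M) - Real.log a) := by
  have hcon : ConcaveOn ℝ (Set.Ioi 0) Real.log := strictConcaveOn_log_Ioi.concaveOn
  have hbm1 : b / M ≤ 1 := (div_le_one hM).mpr hbM
  have key := hcon.2 (Set.mem_Ioi.mpr ha) (Set.mem_Ioi.mpr (by linarith : (0:ℝ) < a + M))
    (by linarith : (0:ℝ) ≤ 1 - b / M) (by positivity : (0:ℝ) ≤ b / M) (by ring)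
  rw [smul_eq_mul, smul_eq_mul, smul_eq_mul, smul_eq_mul] at key
  have heq : (1 - b / M) * a + b / M * (a + M) = a + b := by
    field_simp
    ring
  rw [heq] at key
  nlinarith [key]

private lemma bump_integral {L x0 h : ℝ} (hL : 0 < L) (hh : 0 < h)
    (h1 : 0 ≤ x0 - h) (h2 : x0 + h ≤ 1) :
    ∫ x in (0:ℝ)..1, max (L * (h - |x - x0|)) 0 = L * h ^ 2 := by
  have hcont : Continuous fun x : ℝ => max (L * (h - |x - x0|)) 0 := by fun_prop
  have hint : ∀ p q : ℝ, IntervalIntegrable (fun x => max (L * (h - |x - x0|)) 0) volume p q :=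
    fun p q => hcont.intervalIntegrable p q
  have hsplit1 := integral_add_adjacent_intervals (μ := volume) (hint 0 (x0 - h)) (hint (x0 - h) 1)
  have hsplit2 := integral_add_adjacent_intervals (μ := volume)
    (hint (x0 - h) (x0 + h)) (hint (x0 + h) 1)
  have e1 : ∫ x in (0:ℝ)..(x0 - h), max (L * (h - |x - x0|)) 0 = 0 := by
    have hEq : Set.EqOn (fun x => max (L * (h - |x - x0|)) 0) (fun _ => (0:ℝ))
        (Set.uIcc 0 (x0 - h)) := by
      intro x hx
      rw [Set.uIcc_of_le h1] at hx
      have habs : h ≤ |x - x0| := by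
        rw [abs_sub_comm]
        calc h ≤ x0 - x := by linarith [hx.2]
        _ ≤ |x0 - x| := le_abs_self _
      simp only
      exact max_eq_right (by nlinarith)
    rw [integral_congr hEq, intervalIntegral.integral_zero]
  have e3 : ∫ x in (x0 + h)..1, max (L * (h - |x - x0|)) 0 = 0 := by
    have hEq : Set.EqOn (fun x => max (L * (h - |x - x0|)) 0) (fun _ => (0:ℝ))
        (Set.uIcc (x0 + h) 1) := by
      intro x hx
      rw [Set.uIcc_of_le h2] at hx
      have habs : h ≤ |x - x0| := by
        calc h ≤ x - x0 := by linarith [hx.1]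
        _ ≤ |x - x0| := le_abs_self _
      simp only
      exact max_eq_right (by nlinarith)
    rw [integral_congr hEq, intervalIntegral.integral_zero]
  have e2 : ∫ x in (x0 - h)..(x0 + h), max (L * (h - |x - x0|)) 0 = L * h ^ 2 := by
    have hEq : Set.EqOn (fun x => max (L * (h - |x - x0|)) 0) (fun x => L * (h - |x - x0|))
        (Set.uIcc (x0 - h) (x0 + h)) := by
      intro x hx
      rw [Set.uIcc_of_le (by linarith)] at hx
      have habs : |x - x0| ≤ h := abs_le.mpr ⟨by linarith [hx.1], by linarith [hx.2]⟩
      simp only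
      exact max_eq_left (by nlinarith)
    rw [integral_congr hEq, intervalIntegral.integral_const_mul]
    have hmid : ∫ x in (x0 - h)..(x0 + h), (h - |x - x0|) = h ^ 2 := by
      have hcomp := intervalIntegral.integral_comp_sub_right (a := x0 - h) (b := x0 + h)
        (fun y => h - |y|) x0
      rw [show x0 - h - x0 = -h by ring, show x0 + h - x0 = h by ring] at hcomp
      rw [hcomp]
      have hc2 : Continuous fun y : ℝ => h - |y| := by fun_prop
      have hsp := integral_add_adjacent_intervals (a := -h) (b := 0) (c := h) (μ := volume)
        (hc2.intervalIntegrable _ _) (hc2.intervalIntegrable _ _)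
      have eL : ∫ y in (-h : ℝ)..0, (h - |y|) = h ^ 2 / 2 := by
        have hEq2 : Set.EqOn (fun y : ℝ => h - |y|) (fun y => h + y) (Set.uIcc (-h) 0) := by
          intro y hy
          rw [Set.uIcc_of_le (by linarith)] at hy
          simp only
          rw [abs_of_nonpos hy.2]; ring
        rw [integral_congr hEq2,
          integral_add intervalIntegrable_const intervalIntegrable_id,
          intervalIntegral.integral_const, integral_id]
        simp only [smul_eq_mul]
        ring
      have eR : ∫ y in (0 : ℝ)..h, (h - |y|) = h ^ 2 / 2 := by
        have hEq2 : Set.EqOn (fun y : ℝ => h - |y|) (fun y => h - y) (Set.uIcc 0 h) := by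
          intro y hy
          rw [Set.uIcc_of_le (by linarith)] at hy
          simp only
          rw [abs_of_nonneg hy.1]
        rw [integral_congr hEq2,
          integral_sub intervalIntegrable_const intervalIntegrable_id,
          intervalIntegral.integral_const, integral_id]
        simp only [smul_eq_mul]
        ring
      rw [eL, eR] at hsp
      linarith
    rw [hmid]
  rw [← hsplit1, ← hsplit2, e1, e2, e3]
  ring

/-- KL divergence from the uniform distribution on `[0,1]` to the triangle
perturbation distribution: `KL(Uniform ‖ P_f) = ∫₀¹ log(1 / f) ≤ C (h³ + h⁴)`
for a constant `C` depending only on `L`. -/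
theorem kl_uniform_triDens_le (L : ℝ) (hL : 0 < L) :
    ∃ C : ℝ, 0 < C ∧ ∀ x0 h : ℝ, x0 ∈ Set.Ioo (0 : ℝ) 1 → 0 < h →
      h ≤ min x0 (1 - x0) → L * h ^ 2 < 1 → 1 - L * h ^ 2 + L * h ≤ 2 →
      (∫ x in Set.Icc (0 : ℝ) 1, Real.log (1 / triDens L x0 h x))
        ≤ C * (h ^ 3 + h ^ 4) := by
  refine ⟨3 * L ^ 2 + 9 * (2 * L) * Real.sqrt (2 * L), by positivity, ?_⟩
  intro x0 h hx0 hh hmin hsmall hub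
  obtain ⟨hx0l, hx0r⟩ := hx0
  have hhx0 : h ≤ x0 := le_trans hmin (min_le_left _ _)
  have hhx1 : h ≤ 1 - x0 := le_trans hmin (min_le_right _ _)
  have hh2 : h ≤ 1/2 := by linarith
  set a : ℝ := 1 - L * h ^ 2 with ha_def
  have hapos : 0 < a := by simp only [ha_def]; linarith
  have hfx : ∀ x, triDens L x0 h x = a + max (L * (h - |x - x0|)) 0 := fun x => rfl
  have hfpos : ∀ x, 0 < triDens L x0 h x := by
    intro x
    rw [hfx]
    have := le_max_right (L * (h - |x - x0|)) 0
    linarith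
  have hcontf : Continuous (fun x => triDens L x0 h x) := by
    unfold triDens; fun_prop
  have hcontlog : Continuous (fun x => -Real.log (triDens L x0 h x)) :=
    (hcontf.log (fun x => (hfpos x).ne')).neg
  have hIntlog : ∀ p q : ℝ,
      IntervalIntegrable (fun x => -Real.log (triDens L x0 h x)) volume p q :=
    fun p q => hcontlog.intervalIntegrable p q
  have hstep1 : (∫ x in Set.Icc (0:ℝ) 1, Real.log (1 / triDens L x0 h x))
      = ∫ x in (0:ℝ)..1, -Real.log (triDens L x0 h x) := by
    rw [intervalIntegral.integral_of_le (by norm_num : (0:ℝ) ≤ 1),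
      ← MeasureTheory.integral_Icc_eq_integral_Ioc]
    congr 1
    funext x
    rw [one_div, Real.log_inv]
  rw [hstep1]
  -- useful facts
  have hLh : L * h * (1 - h) ≤ 1 := by nlinarith
  have haLh : 0 < a + L * h := by positivity
  rcases le_or_gt (L * h ^ 2) (1/2) with hu | hu
  · -- regime 1 : L h² ≤ 1/2, use chord bound
    set c : ℝ := (Real.log (a + L * h) - Real.log a) / (L * h) with hc_def
    have hmono : (∫ x in (0:ℝ)..1, -Real.log (triDens L x0 h x))
        ≤ ∫ x in (0:ℝ)..1, (-Real.log a - c * max (L * (h - |x - x0|)) 0) := by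
      apply integral_mono_on (by norm_num) (hIntlog 0 1)
      · exact ((continuous_const.sub (continuous_const.mul (by fun_prop))).intervalIntegrable 0 1)
      · intro x _
        have hb0 : (0:ℝ) ≤ max (L * (h - |x - x0|)) 0 := le_max_right _ _
        have hbM : max (L * (h - |x - x0|)) 0 ≤ L * h := by
          apply max_le
          · nlinarith [abs_nonneg (x - x0)]
          · positivity
        have hch := chord_bound (max (L * (h - |x - x0|)) 0) hapos
          (by positivity : (0:ℝ) < L * h) hb0 hbM
        rw [hfx]
        have hcb : c * max (L * (h - |x - x0|)) 0
            = max (L * (h - |x - x0|)) 0 / (L * h) * (Real.log (a + L * h) - Real.log a) := by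
          rw [hc_def]; ring
        linarith
    have hRHS : (∫ x in (0:ℝ)..1, (-Real.log a - c * max (L * (h - |x - x0|)) 0))
        = -Real.log a - c * (L * h ^ 2) := by
      rw [integral_sub intervalIntegrable_const
        (((show Continuous fun x : ℝ => c * max (L * (h - |x - x0|)) 0 by fun_prop).intervalIntegrable 0 1)),
        intervalIntegral.integral_const, intervalIntegral.integral_const_mul, bump_integral hL hh (by linarith) (by linarith)]
      simp
    rw [hRHS] at hmono
    have hcL : c * (L * h ^ 2) = h * (Real.log (a + L * h) - Real.log a) := by
      rw [hc_def]
      field_simp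
    rw [hcL] at hmono
    -- real analysis bound
    set u : ℝ := L * h ^ 2 with hu_def
    set w : ℝ := L * h - L * h ^ 2 with hw_def
    clear_value u w
    have hu0 : (0:ℝ) ≤ u := by rw [hu_def]; positivity
    have hw0 : 0 ≤ w := by
      rw [hw_def]
      nlinarith [mul_nonneg (mul_nonneg hL.le hh.le) (by linarith : (0:ℝ) ≤ 1 - h)]
    have haw : a + L * h = 1 + w := by rw [ha_def, hu_def, hw_def]; ring
    have l1 : -Real.log a ≤ u + 2 * u ^ 2 := by
      have := neg_log_le_inv_sub_one hapos
      have hinv : a⁻¹ ≤ 1 + u + 2 * u ^ 2 := by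
        rw [inv_eq_one_div, div_le_iff₀ hapos, ha_def]
        nlinarith [sq_nonneg u, hu0, hu]
      linarith
    have l2 : -Real.log (a + L * h) ≤ -w + w ^ 2 := by
      rw [haw]
      have hpos : (0:ℝ) < 1 + w := by linarith
      have := neg_log_le_inv_sub_one hpos
      have hinv : (1 + w)⁻¹ ≤ 1 - w + w ^ 2 := by
        rw [inv_eq_one_div, div_le_iff₀ hpos]
        nlinarith [mul_nonneg (mul_nonneg hw0 hw0) hw0]
      linarith
    have hfin : -Real.log a - h * (Real.log (a + L * h) - Real.log a)
        ≤ 3 * L ^ 2 * (h ^ 3 + h ^ 4) := by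
      have e1 : -Real.log a - h * (Real.log (a + L * h) - Real.log a)
          = (1 - h) * (-Real.log a) + h * (-Real.log (a + L * h)) := by ring
      rw [e1]
      have m1 : (1 - h) * (-Real.log a) ≤ (1 - h) * (u + 2 * u ^ 2) :=
        mul_le_mul_of_nonneg_left l1 (by linarith)
      have m2 : h * (-Real.log (a + L * h)) ≤ h * (-w + w ^ 2) :=
        mul_le_mul_of_nonneg_left l2 hh.le
      have hq : (1 - h) * (u + 2 * u ^ 2) + h * (-w + w ^ 2) ≤ 3 * L ^ 2 * (h ^ 3 + h ^ 4) := by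
        rw [hu_def, hw_def]
        nlinarith [mul_nonneg (sq_nonneg L) (pow_nonneg hh.le 3),
          mul_nonneg (sq_nonneg L) (pow_nonneg hh.le 4),
          mul_nonneg (sq_nonneg L) (pow_nonneg hh.le 5)]
      linarith
    calc (∫ x in (0:ℝ)..1, -Real.log (triDens L x0 h x))
        ≤ -Real.log a - h * (Real.log (a + L * h) - Real.log a) := hmono
      _ ≤ 3 * L ^ 2 * (h ^ 3 + h ^ 4) := hfin
      _ ≤ (3 * L ^ 2 + 9 * (2 * L) * Real.sqrt (2 * L)) * (h ^ 3 + h ^ 4) := by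
          have h34 : (0:ℝ) ≤ h ^ 3 + h ^ 4 := by positivity
          have : (0:ℝ) ≤ 9 * (2 * L) * Real.sqrt (2 * L) := by positivity
          nlinarith [mul_nonneg this h34]
  · -- regime 2 : L h² > 1/2
    have hL2 : (2:ℝ) ≤ L := by
      nlinarith [mul_nonneg hL.le (show (0:ℝ) ≤ 1 - 4 * h ^ 2 by nlinarith)]
    -- split the integral
    have hsplit1 := integral_add_adjacent_intervals (μ := volume)
      (hIntlog 0 (x0 - h)) (hIntlog (x0 - h) 1)
    have hsplit2 := integral_add_adjacent_intervals (μ := volume)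
      (hIntlog (x0 - h) (x0 + h)) (hIntlog (x0 + h) 1)
    have e1 : ∫ x in (0:ℝ)..(x0 - h), -Real.log (triDens L x0 h x)
        = (x0 - h) * (-Real.log a) := by
      have hEq : Set.EqOn (fun x => -Real.log (triDens L x0 h x)) (fun _ => -Real.log a)
          (Set.uIcc 0 (x0 - h)) := by
        intro x hx
        rw [Set.uIcc_of_le (by linarith)] at hx
        have habs : h ≤ |x - x0| := by
          rw [abs_sub_comm]
          calc h ≤ x0 - x := by linarith [hx.2]
          _ ≤ |x0 - x| := le_abs_self _
        simp only [hfx]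
        rw [max_eq_right (by nlinarith)]
        norm_num
      rw [integral_congr hEq, intervalIntegral.integral_const]
      simp [mul_comm]
    have e3 : ∫ x in (x0 + h)..1, -Real.log (triDens L x0 h x)
        = (1 - (x0 + h)) * (-Real.log a) := by
      have hEq : Set.EqOn (fun x => -Real.log (triDens L x0 h x)) (fun _ => -Real.log a)
          (Set.uIcc (x0 + h) 1) := by
        intro x hx
        rw [Set.uIcc_of_le (by linarith)] at hx
        have habs : h ≤ |x - x0| := by
          calc h ≤ x - x0 := by linarith [hx.1]
          _ ≤ |x - x0| := le_abs_self _
        simp only [hfx]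
        rw [max_eq_right (by nlinarith)]
        norm_num
      rw [integral_congr hEq, intervalIntegral.integral_const]
      simp [mul_comm]
    -- middle piece
    have hsqrt2 : (a + L * h) ^ ((1/2):ℝ) ≤ 2 := by
      calc (a + L * h) ^ ((1/2):ℝ) ≤ (2:ℝ) ^ ((1/2):ℝ) := by
            apply Real.rpow_le_rpow (by positivity) (by rw [ha_def]; linarith) (by norm_num)
        _ ≤ (2:ℝ) ^ ((1:ℝ)) := Real.rpow_le_rpow_of_exponent_le (by norm_num) (by norm_num)
        _ = 2 := by norm_num
    -- left half
    have eL : ∫ x in (x0 - h)..x0, -Real.log (triDens L x0 h x) ≤ 8 / L := by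
      set d1 : ℝ := a + L * h - L * x0 with hd1
      have hEq : Set.EqOn (fun x => -Real.log (triDens L x0 h x))
          (fun x => -Real.log (L * x + d1)) (Set.uIcc (x0 - h) x0) := by
        intro x hx
        rw [Set.uIcc_of_le (by linarith)] at hx
        have habs : |x - x0| = x0 - x := by
          rw [abs_sub_comm, abs_of_nonneg (by linarith [hx.2])]
        simp only [hfx, habs]
        rw [max_eq_left (by nlinarith [hx.1]), hd1]
        congr 1
        ring
      have hbase : ∀ x ∈ Set.Icc (x0 - h) x0, 0 < L * x + d1 := by
        intro x hx
        have : L * x + d1 = a + L * (x - (x0 - h)) := by rw [hd1]; ring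
        rw [this]
        have : 0 ≤ x - (x0 - h) := by linarith [hx.1]
        nlinarith
      have hcontOn : ContinuousOn (fun x => 2 * (L * x + d1) ^ (-(1/2):ℝ))
          (Set.uIcc (x0 - h) x0) := by
        apply ContinuousOn.mul continuousOn_const
        apply ContinuousOn.rpow_const (by fun_prop)
        intro x hx
        rw [Set.uIcc_of_le (by linarith)] at hx
        exact Or.inl (hbase x hx).ne'
      have hmono2 : ∫ x in (x0 - h)..x0, -Real.log (triDens L x0 h x)
          ≤ ∫ x in (x0 - h)..x0, 2 * (L * x + d1) ^ (-(1/2):ℝ) := by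
        rw [integral_congr hEq]
        apply integral_mono_on (by linarith) _ (hcontOn.intervalIntegrable)
        · intro x hx
          exact neg_log_le_two_rpow (hbase x hx)
        · apply ContinuousOn.intervalIntegrable
          apply ContinuousOn.neg
          apply ContinuousOn.log (by fun_prop)
          intro x hx
          rw [Set.uIcc_of_le (by linarith)] at hx
          exact (hbase x hx).ne'
      have hcalc : ∫ x in (x0 - h)..x0, 2 * (L * x + d1) ^ (-(1/2):ℝ) ≤ 8 / L := by
        rw [intervalIntegral.integral_const_mul]
        have hcomp := intervalIntegral.integral_comp_mul_add (a := x0 - h) (b := x0)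
          (fun y => y ^ (-(1/2):ℝ)) hL.ne' d1
        rw [show L * (x0 - h) + d1 = a by rw [hd1]; ring,
          show L * x0 + d1 = a + L * h by rw [hd1]; ring] at hcomp
        rw [hcomp, integral_rpow (Or.inl (by norm_num))]
        rw [smul_eq_mul]
        have h12 : -(1/2) + 1 = ((1/2):ℝ) := by norm_num
        rw [h12]
        have hub2 : ((a + L * h) ^ ((1/2):ℝ) - a ^ ((1/2):ℝ)) / (1/2) ≤ 4 := by
          have := Real.rpow_nonneg hapos.le ((1/2):ℝ)
          rw [div_le_iff₀ (by norm_num)]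
          linarith [hsqrt2]
        calc 2 * (L⁻¹ * (((a + L * h) ^ ((1/2):ℝ) - a ^ ((1/2):ℝ)) / (1/2)))
            ≤ 2 * (L⁻¹ * 4) := by
              apply mul_le_mul_of_nonneg_left _ (by norm_num)
              apply mul_le_mul_of_nonneg_left hub2 (by positivity)
          _ = 8 / L := by field_simp; ring
      linarith
    -- right half
    have eR : ∫ x in x0..(x0 + h), -Real.log (triDens L x0 h x) ≤ 8 / L := by
      set d2 : ℝ := a + L * h + L * x0 with hd2
      have hEq : Set.EqOn (fun x => -Real.log (triDens L x0 h x))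
          (fun x => -Real.log (-L * x + d2)) (Set.uIcc x0 (x0 + h)) := by
        intro x hx
        rw [Set.uIcc_of_le (by linarith)] at hx
        have habs : |x - x0| = x - x0 := abs_of_nonneg (by linarith [hx.1])
        simp only [hfx, habs]
        rw [max_eq_left (by nlinarith [hx.2]), hd2]
        congr 1
        ring
      have hbase : ∀ x ∈ Set.Icc x0 (x0 + h), 0 < -L * x + d2 := by
        intro x hx
        have : -L * x + d2 = a + L * ((x0 + h) - x) := by rw [hd2]; ring
        rw [this]
        have : 0 ≤ (x0 + h) - x := by linarith [hx.2]
        nlinarith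
      have hcontOn : ContinuousOn (fun x => 2 * (-L * x + d2) ^ (-(1/2):ℝ))
          (Set.uIcc x0 (x0 + h)) := by
        apply ContinuousOn.mul continuousOn_const
        apply ContinuousOn.rpow_const (by fun_prop)
        intro x hx
        rw [Set.uIcc_of_le (by linarith)] at hx
        exact Or.inl (hbase x hx).ne'
      have hmono2 : ∫ x in x0..(x0 + h), -Real.log (triDens L x0 h x)
          ≤ ∫ x in x0..(x0 + h), 2 * (-L * x + d2) ^ (-(1/2):ℝ) := by
        rw [integral_congr hEq]
        apply integral_mono_on (by linarith) _ (hcontOn.intervalIntegrable)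
        · intro x hx
          exact neg_log_le_two_rpow (hbase x hx)
        · apply ContinuousOn.intervalIntegrable
          apply ContinuousOn.neg
          apply ContinuousOn.log (by fun_prop)
          intro x hx
          rw [Set.uIcc_of_le (by linarith)] at hx
          exact (hbase x hx).ne'
      have hcalc : ∫ x in x0..(x0 + h), 2 * (-L * x + d2) ^ (-(1/2):ℝ) ≤ 8 / L := by
        rw [intervalIntegral.integral_const_mul]
        have hcomp := intervalIntegral.integral_comp_mul_add (a := x0) (b := x0 + h)
          (fun y => y ^ (-(1/2):ℝ)) (neg_ne_zero.mpr hL.ne') d2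
        rw [show -L * x0 + d2 = a + L * h by rw [hd2]; ring,
          show -L * (x0 + h) + d2 = a by rw [hd2]; ring] at hcomp
        rw [hcomp, integral_rpow (Or.inl (by norm_num))]
        rw [smul_eq_mul]
        have h12 : -(1/2) + 1 = ((1/2):ℝ) := by norm_num
        rw [h12]
        have hub2 : (-L)⁻¹ * ((a ^ ((1/2):ℝ) - (a + L * h) ^ ((1/2):ℝ)) / (1/2)) ≤ 4 / L := by
          have ha2 := Real.rpow_nonneg hapos.le ((1/2):ℝ)
          have : (-L)⁻¹ * ((a ^ ((1/2):ℝ) - (a + L * h) ^ ((1/2):ℝ)) / (1/2))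
              = L⁻¹ * (((a + L * h) ^ ((1/2):ℝ) - a ^ ((1/2):ℝ)) / (1/2)) := by
            rw [inv_neg]
            ring
          rw [this]
          have hub3 : ((a + L * h) ^ ((1/2):ℝ) - a ^ ((1/2):ℝ)) / (1/2) ≤ 4 := by
            rw [div_le_iff₀ (by norm_num)]
            linarith [hsqrt2]
          calc L⁻¹ * (((a + L * h) ^ ((1/2):ℝ) - a ^ ((1/2):ℝ)) / (1/2))
              ≤ L⁻¹ * 4 := mul_le_mul_of_nonneg_left hub3 (by positivity)
            _ = 4 / L := by field_simp
        calc 2 * ((-L)⁻¹ * ((a ^ ((1/2):ℝ) - (a + L * h) ^ ((1/2):ℝ)) / (1/2)))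
            ≤ 2 * (4 / L) := mul_le_mul_of_nonneg_left hub2 (by norm_num)
          _ = 8 / L := by ring
      linarith
    -- middle = left + right
    have hsplitm := integral_add_adjacent_intervals (μ := volume)
      (hIntlog (x0 - h) x0) (hIntlog x0 (x0 + h))
    have e2 : ∫ x in (x0 - h)..(x0 + h), -Real.log (triDens L x0 h x) ≤ 16 / L := by
      rw [← hsplitm]
      calc (∫ x in (x0 - h)..x0, -Real.log (triDens L x0 h x))
            + ∫ x in x0..(x0 + h), -Real.log (triDens L x0 h x)
          ≤ 8 / L + 8 / L := add_le_add eL eR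
        _ = 16 / L := by ring
    -- a ≥ 1 - 2h  and -log a ≤ 1/a - 1
    have hLh2 : L * h ≤ 2 := by
      nlinarith [mul_nonneg (mul_nonneg hL.le hh.le) (by linarith : (0:ℝ) ≤ 1/2 - h)]
    have ha2h : 1 - 2 * h ≤ a := by
      rw [ha_def]
      nlinarith [mul_le_mul_of_nonneg_right hLh2 hh.le]
    have hloga : (1 - 2*h) * (-Real.log a) ≤ 1 := by
      have hl := neg_log_le_inv_sub_one hapos
      have hinva : (1 - 2*h) * a⁻¹ ≤ 1 := by
        rw [mul_inv_le_iff₀ hapos]  -- (1-2h) ≤ 1 * a ?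
        linarith
      have hnl : 0 ≤ -Real.log a ∨ -Real.log a < 0 := le_or_gt 0 _
      rcases hnl with hp | hn
      · calc (1 - 2*h) * (-Real.log a) ≤ (1 - 2*h) * (a⁻¹ - 1) :=
              mul_le_mul_of_nonneg_left hl (by linarith)
          _ ≤ (1 - 2*h) * a⁻¹ := by nlinarith [inv_pos.mpr hapos]
          _ ≤ 1 := hinva
      · nlinarith
    -- total
    have htot : (∫ x in (0:ℝ)..1, -Real.log (triDens L x0 h x)) ≤ 9 := by
      rw [← hsplit1, ← hsplit2, e1, e3]
      have h16 : 16 / L ≤ 8 := by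
        rw [div_le_iff₀ (by linarith)]
        linarith
      have : (x0 - h) * (-Real.log a) + (1 - (x0 + h)) * (-Real.log a)
          = (1 - 2*h) * (-Real.log a) := by ring
      linarith [e2]
    -- compare with C h³
    set s : ℝ := Real.sqrt (2 * L) with hs_def
    have hs0 : 0 ≤ s := Real.sqrt_nonneg _
    have hss : s ^ 2 = 2 * L := Real.sq_sqrt (by linarith)
    have hss2 : h ^ 2 * s ^ 2 = h ^ 2 * (2 * L) := by rw [hss]
    have hs1 : 1 < h * s := by nlinarith [mul_nonneg hh.le hs0]
    have hs3 : 1 < (h * s) ^ 3 := one_lt_pow₀ hs1 (by norm_num)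
    have hcube : (h * s) ^ 3 = 2 * L * s * h ^ 3 := by
      have : s ^ 3 = 2 * L * s := by
        rw [pow_succ, hss]
      calc (h * s) ^ 3 = h ^ 3 * s ^ 3 := by ring
        _ = 2 * L * s * h ^ 3 := by rw [this]; ring
    have hfinal : (9:ℝ) ≤ (3 * L ^ 2 + 9 * (2 * L) * s) * (h ^ 3 + h ^ 4) := by
      have h9 : (9:ℝ) ≤ 9 * (2 * L * s * h ^ 3) := by
        rw [← hcube]; linarith
      have t1 : (0:ℝ) ≤ 3 * L ^ 2 * (h ^ 3 + h ^ 4) := by positivity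
      have t2 : (0:ℝ) ≤ 9 * (2 * L) * s * h ^ 4 := by positivity
      have expand : (3 * L ^ 2 + 9 * (2 * L) * s) * (h ^ 3 + h ^ 4)
          = 3 * L ^ 2 * (h ^ 3 + h ^ 4) + 9 * (2 * L * s * h ^ 3) + 9 * (2 * L) * s * h ^ 4 := by
        ring
      linarith
    linarith
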